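/- Let μ and ν be Borel probability measures on ℝᵐ with finite first moment. If ∫ f dμ ≤ ∫ f dν for every convex 1-Lipschitz function f : ℝᵐ → ℝ that is bounded from below, then ∫ f dμ ≤ ∫ f dν for every convex function f : ℝᵐ → ℝ (i.e. μ is dominated by ν in the convex order). -/

import Mathlib

open MeasureTheory Filter Topology
open scoped NNReal

set_option linter.unusedSectionVars false

section myAux
variable {E : Type*} [NormedAddCommGroup E] [NormedSpace ℝ E] [FiniteDimensional ℝ E]

lemma my_exists_affine_minorant {E : Type*} [NormedAddCommGroup E] [NormedSpace ℝ E]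
    [FiniteDimensional ℝ E] {f : E → ℝ} (hf : ConvexOn ℝ Set.univ f) :
    ∃ (g : E →L[ℝ] ℝ) (c : ℝ), ∀ x, g x + c ≤ f x := by
  have hfc : Continuous f := hf.locallyLipschitz.continuous
  set S : Set (E × ℝ) := {p | f p.1 < p.2} with hS
  have hSo : IsOpen S := isOpen_lt (hfc.comp continuous_fst) continuous_snd
  have hSc : Convex ℝ S := by
    have := hf.convex_strict_epigraph
    simpa [hS, Set.setOf_and] using this
  have hp : ((0 : E), f 0) ∉ S := by simp [hS]
  obtain ⟨L, hL⟩ := geometric_hahn_banach_open_point hSc hSo hp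
  set c : ℝ := L (0, 1) with hc
  have hdec : ∀ x t, L (x, t) = L (x, 0) + t * c := by
    intro x t
    have : (x, t) = (x, (0:ℝ)) + t • ((0:E), (1:ℝ)) := by simp
    rw [this, map_add, L.map_smul]; simp [hc, smul_eq_mul]
  have hz : ((0:E), (0:ℝ)) = (0 : E × ℝ) := rfl
  have hK : L ((0:E), f 0) = f 0 * c := by rw [hdec, hz, map_zero, zero_add]
  have hcneg : c < 0 := by
    have h1 := hL ((0:E), f 0 + 1) (by simp [hS])
    rw [hdec, hK] at h1
    rw [hz, map_zero, zero_add] at h1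
    nlinarith
  have hmain : ∀ x, L (x, 0) + f x * c ≤ f 0 * c := by
    intro x
    by_contra hcon
    push_neg at hcon
    set A := L (x, 0) + f x * c with hA
    set K := f 0 * c with hKd
    have hε : (0:ℝ) < (K - A) / (2 * c) := by
      apply div_pos_of_neg_of_neg <;> nlinarith
    have := hL (x, f x + (K - A) / (2 * c)) (by simp [hS]; linarith)
    rw [hdec, hK] at this
    have hc0 : c ≠ 0 := ne_of_lt hcneg
    have hc2 : ((K - A) / (2 * c)) * c = (K - A) / 2 := by
      field_simp
    nlinarith
  refine ⟨(-c⁻¹) • L.comp (ContinuousLinearMap.inl ℝ E ℝ), f 0, fun x => ?_⟩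
  have := hmain x
  have hci : c⁻¹ < 0 := inv_lt_zero.mpr hcneg
  simp only [ContinuousLinearMap.smul_apply, ContinuousLinearMap.comp_apply,
    ContinuousLinearMap.inl_apply, smul_eq_mul]
  have h2 : f x * c ≤ f 0 * c - L (x, 0) := by linarith
  have hc0 : c ≠ 0 := ne_of_lt hcneg
  have h3 : c⁻¹ * (f 0 * c - L (x,0)) ≤ c⁻¹ * (f x * c) :=
    mul_le_mul_of_nonpos_left h2 (le_of_lt hci)
  have h4 : c⁻¹ * (f x * c) = f x := by field_simp
  have h5 : c⁻¹ * (f 0 * c - L (x,0)) = f 0 - c⁻¹ * L (x,0) := by field_simp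
  linarith

variable [MeasurableSpace E] [BorelSpace E]
variable (μ ν : Measure E) [IsProbabilityMeasure μ] [IsProbabilityMeasure ν]

lemma my_scaled
    (h : ∀ f : E → ℝ, ConvexOn ℝ Set.univ f → LipschitzWith 1 f →
      BddBelow (Set.range f) → ∫ x, f x ∂μ ≤ ∫ x, f x ∂ν)
    (K : ℝ≥0) (f : E → ℝ) (hf : ConvexOn ℝ Set.univ f) (hl : LipschitzWith K f)
    (hb : BddBelow (Set.range f)) : ∫ x, f x ∂μ ≤ ∫ x, f x ∂ν := by
  set c : ℝ := (K : ℝ) + 1 with hc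
  have hcpos : (0:ℝ) < c := by positivity
  set f' : E → ℝ := fun x => c⁻¹ * f x with hf'
  have h1 : ConvexOn ℝ Set.univ f' := hf.smul (by positivity)
  have h2 : LipschitzWith 1 f' := by
    apply LipschitzWith.of_dist_le_mul
    intro x y
    have := hl.dist_le_mul x y
    rw [Real.dist_eq, hf']
    simp only
    rw [← mul_sub, abs_mul, abs_of_pos (by positivity : (0:ℝ) < c⁻¹)]
    rw [Real.dist_eq] at this
    have hK : (K:ℝ) ≤ c := by simp [hc]
    calc c⁻¹ * |f x - f y| ≤ c⁻¹ * (c * dist x y) := by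
          apply mul_le_mul_of_nonneg_left _ (by positivity)
          exact this.trans (mul_le_mul_of_nonneg_right hK dist_nonneg)
      _ = 1 * dist x y := by field_simp
  have h3 : BddBelow (Set.range f') := by
    obtain ⟨b, hb⟩ := hb
    refine ⟨c⁻¹ * b, fun z hz => ?_⟩
    obtain ⟨x, rfl⟩ := hz
    exact mul_le_mul_of_nonneg_left (hb ⟨x, rfl⟩) (by positivity)
  have := h f' h1 h2 h3
  rw [hf'] at this
  simp only [integral_const_mul] at this
  exact le_of_mul_le_mul_left this (by positivity)

lemma my_nonneg_part
    (h : ∀ f : E → ℝ, ConvexOn ℝ Set.univ f → LipschitzWith 1 f →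
      BddBelow (Set.range f) → ∫ x, f x ∂μ ≤ ∫ x, f x ∂ν)
    (g : E → ℝ) (hg : ConvexOn ℝ Set.univ g) (hg0 : ∀ x, 0 ≤ g x)
    (hgμ : Integrable g μ) (hgν : Integrable g ν) :
    ∫ x, g x ∂μ ≤ ∫ x, g x ∂ν := by
  have hgc : Continuous g := hg.locallyLipschitz.continuous
  set gI : ℕ → E → ℝ := fun n x => ⨅ y, (g y + n * ‖x - y‖) with hgI
  have hbdd : ∀ (n : ℕ) (x : E), BddBelow (Set.range fun y => g y + n * ‖x - y‖) := by
    intro n x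
    refine ⟨0, fun z hz => ?_⟩
    obtain ⟨y, rfl⟩ := hz
    have := hg0 y
    positivity
  have hle : ∀ n x, gI n x ≤ g x := by
    intro n x
    have := ciInf_le (hbdd n x) x
    simpa using this
  have hge0 : ∀ n x, 0 ≤ gI n x := by
    intro n x
    exact le_ciInf fun y => by have := hg0 y; positivity
  have hmono : ∀ x, Monotone fun n => gI n x := by
    intro x
    apply monotone_nat_of_le_succ
    intro n
    apply le_ciInf
    intro y
    exact (ciInf_le (hbdd n x) y).trans (by
      have : (n:ℝ) * ‖x - y‖ ≤ (n+1:ℕ) * ‖x - y‖ := by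
        apply mul_le_mul_of_nonneg_right _ (norm_nonneg _)
        push_cast; linarith
      linarith)
  have hlip_aux : ∀ (n : ℕ) (x z : E), gI n x ≤ gI n z + n * ‖x - z‖ := by
    intro n x z
    rw [← sub_le_iff_le_add]
    apply le_ciInf
    intro y
    have h1 : gI n x ≤ g y + n * ‖x - y‖ := ciInf_le (hbdd n x) y
    have h2 : ‖x - y‖ ≤ ‖x - z‖ + ‖z - y‖ := by
      simpa using norm_add_le (x - z) (z - y)
    nlinarith [norm_nonneg (x - z), norm_nonneg (z - y), Nat.cast_nonneg (α := ℝ) n]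
  have hlip : ∀ n : ℕ, LipschitzWith n (gI n) := by
    intro n
    apply LipschitzWith.of_dist_le_mul
    intro x z
    rw [Real.dist_eq, abs_sub_le_iff, dist_eq_norm]
    constructor
    · have := hlip_aux n x z; push_cast; linarith
    · have := hlip_aux n z x; rw [norm_sub_rev] at this; push_cast; linarith
  have hconv : ∀ n : ℕ, ConvexOn ℝ Set.univ (gI n) := by
    intro n
    refine ⟨convex_univ, fun x _ z _ a b ha hb hab => ?_⟩
    apply le_of_forall_pos_le_add
    intro ε hε
    obtain ⟨u, hu⟩ := exists_lt_of_ciInf_lt (show gI n x < gI n x + ε/2 by linarith)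
    obtain ⟨v, hv⟩ := exists_lt_of_ciInf_lt (show gI n z < gI n z + ε/2 by linarith)
    have key : gI n (a • x + b • z) ≤ g (a • u + b • v) + n * ‖(a • x + b • z) - (a • u + b • v)‖ :=
      ciInf_le (hbdd n _) _
    have hgc2 : g (a • u + b • v) ≤ a * g u + b * g v := by
      have := hg.2 (Set.mem_univ u) (Set.mem_univ v) ha hb hab
      simpa [smul_eq_mul] using this
    have hnorm : ‖(a • x + b • z) - (a • u + b • v)‖ ≤ a * ‖x - u‖ + b * ‖z - v‖ := by
      have : (a • x + b • z) - (a • u + b • v) = a • (x - u) + b • (z - v) := by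
        module
      rw [this]
      refine (norm_add_le _ _).trans ?_
      rw [norm_smul, norm_smul, Real.norm_eq_abs, Real.norm_eq_abs,
        abs_of_nonneg ha, abs_of_nonneg hb]
    have hn0 : (0:ℝ) ≤ n := Nat.cast_nonneg n
    calc gI n (a • x + b • z) ≤ a * (g u + n * ‖x - u‖) + b * (g v + n * ‖z - v‖) := by
          nlinarith [mul_le_mul_of_nonneg_left hnorm hn0]
      _ ≤ a * (gI n x + ε/2) + b * (gI n z + ε/2) := by
          have h1 := le_of_lt hu
          have h2 := le_of_lt hv
          nlinarith
      _ ≤ a * gI n x + b * gI n z + ε := by nlinarith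
  have htendsto : ∀ x, Tendsto (fun n => gI n x) atTop (𝓝 (g x)) := by
    intro x
    rw [Metric.tendsto_atTop]
    intro ε hε
    obtain ⟨δ, hδpos, hδ⟩ := Metric.continuous_iff.mp hgc x (ε/2) (by linarith)
    refine ⟨⌈g x / δ⌉₊, fun n hn => ?_⟩
    have hlow : g x - ε/2 ≤ gI n x := by
      apply le_ciInf
      intro y
      rcases lt_or_ge (dist y x) δ with hy | hy
      · have := hδ y hy
        rw [Real.dist_eq] at this
        have h2 : (0:ℝ) ≤ n * ‖x - y‖ := by positivity
        cases abs_lt.mp this with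
        | intro h3 h4 => linarith
      · have h1 : g x ≤ (n:ℝ) * ‖x - y‖ := by
          have h2 : g x / δ ≤ (n:ℝ) := (Nat.le_ceil _).trans (by exact_mod_cast hn)
          have h3 : g x ≤ n * δ := by
            rw [div_le_iff₀ hδpos] at h2; linarith
          have h4 : δ ≤ ‖x - y‖ := by
            rw [dist_eq_norm, norm_sub_rev] at hy; exact hy
          calc g x ≤ n * δ := h3
            _ ≤ n * ‖x - y‖ := mul_le_mul_of_nonneg_left h4 (Nat.cast_nonneg n)
        have := hg0 y
        linarith
    have hd : dist (gI n x) (g x) < ε := by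
      rw [Real.dist_eq, abs_lt]
      have := hle n x
      constructor <;> linarith
    exact hd
  have hint : ∀ (ρ : Measure E) [IsProbabilityMeasure ρ], Integrable g ρ →
      ∀ n, Integrable (gI n) ρ := by
    intro ρ _ hgρ n
    apply hgρ.mono' ((hlip n).continuous.aestronglyMeasurable)
    filter_upwards with x
    rw [Real.norm_eq_abs, abs_of_nonneg (hge0 n x)]
    exact hle n x
  have hTμ : Tendsto (fun n => ∫ x, gI n x ∂μ) atTop (𝓝 (∫ x, g x ∂μ)) := by
    apply integral_tendsto_of_tendsto_of_monotone (hint μ hgμ) hgμ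
    · filter_upwards with x using hmono x
    · filter_upwards with x using htendsto x
  have hTν : Tendsto (fun n => ∫ x, gI n x ∂ν) atTop (𝓝 (∫ x, g x ∂ν)) := by
    apply integral_tendsto_of_tendsto_of_monotone (hint ν hgν) hgν
    · filter_upwards with x using hmono x
    · filter_upwards with x using htendsto x
  refine le_of_tendsto_of_tendsto' hTμ hTν fun n => ?_
  exact my_scaled μ ν h n (gI n) (hconv n) (hlip n) ⟨0, fun z ⟨x, hx⟩ => hx ▸ hge0 n x⟩

lemma my_affine_integrable (g : E →L[ℝ] ℝ) (c : ℝ) (ρ : Measure E) [IsProbabilityMeasure ρ]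
    (hρ1 : Integrable (fun x => ‖x‖) ρ) : Integrable (fun x => g x + c) ρ := by
  apply Integrable.mono' ((hρ1.const_mul ‖g‖).add (integrable_const |c|))
    ((g.continuous.add continuous_const).aestronglyMeasurable)
  filter_upwards with x
  rw [Real.norm_eq_abs]
  exact (abs_add_le _ _).trans (add_le_add (g.le_opNorm x) le_rfl)

lemma my_affine_convex (g : E →L[ℝ] ℝ) (c : ℝ) : ConvexOn ℝ Set.univ (fun x => g x + c) := by
  refine ⟨convex_univ, fun x _ y _ a b ha hb hab => ?_⟩
  have h1 : g (a • x + b • y) = a * g x + b * g y := by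
    rw [map_add, g.map_smul, g.map_smul]; simp [smul_eq_mul]
  have h2 : a * (g x + c) + b * (g y + c) = a * g x + b * g y + (a + b) * c := by ring
  have h3 : (a + b) * c = c := by rw [hab, one_mul]
  show g (a • x + b • y) + c ≤ a * (g x + c) + b * (g y + c)
  linarith [h1, h2, h3]

lemma my_affine_le
    (hμ1 : Integrable (fun x => ‖x‖) μ) (hν1 : Integrable (fun x => ‖x‖) ν)
    (h : ∀ f : E → ℝ, ConvexOn ℝ Set.univ f → LipschitzWith 1 f →
      BddBelow (Set.range f) → ∫ x, f x ∂μ ≤ ∫ x, f x ∂ν)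
    (g : E →L[ℝ] ℝ) (c : ℝ) :
    ∫ x, (g x + c) ∂μ ≤ ∫ x, (g x + c) ∂ν := by
  set a : E → ℝ := fun x => g x + c with ha
  have haμ : Integrable a μ := my_affine_integrable g c μ hμ1
  have haν : Integrable a ν := my_affine_integrable g c ν hν1
  set aN : ℕ → E → ℝ := fun n x => max (a x) (-(n:ℝ)) with haN
  have hconv : ∀ n : ℕ, ConvexOn ℝ Set.univ (aN n) :=
    fun n => (my_affine_convex g c).sup (convexOn_const _ convex_univ)
  have hlipa : LipschitzWith ‖g‖₊ a := by
    apply LipschitzWith.of_dist_le_mul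
    intro x y
    rw [ha]
    simp only
    rw [Real.dist_eq, add_sub_add_right_eq_sub, ← map_sub, ← Real.norm_eq_abs, dist_eq_norm]
    simpa using g.le_opNorm (x - y)
  have hlip : ∀ n : ℕ, LipschitzWith ‖g‖₊ (aN n) := fun n => hlipa.max_const _
  have hbb : ∀ n : ℕ, BddBelow (Set.range (aN n)) :=
    fun n => ⟨-(n:ℝ), fun z ⟨x, hx⟩ => hx ▸ le_max_right _ _⟩
  have hanti : ∀ x, Antitone fun n => aN n x := by
    intro x
    apply antitone_nat_of_succ_le
    intro n
    apply max_le_max le_rfl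
    push_cast; linarith
  have htendsto : ∀ x, Tendsto (fun n => aN n x) atTop (𝓝 (a x)) := by
    intro x
    have hev : ∀ᶠ n : ℕ in atTop, aN n x = a x := by
      filter_upwards [eventually_ge_atTop ⌈|a x|⌉₊] with n hn
      apply max_eq_left
      have h1 : |a x| ≤ (n:ℝ) := (Nat.le_ceil _).trans (by exact_mod_cast hn)
      cases abs_le.mp h1 with
      | intro h2 h3 => linarith
    exact Tendsto.congr' (by filter_upwards [hev] with n hn using hn.symm) tendsto_const_nhds
  have hint : ∀ (ρ : Measure E) [IsProbabilityMeasure ρ], Integrable a ρ →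
      ∀ n, Integrable (aN n) ρ := by
    intro ρ _ haρ n
    apply (haρ.abs.add (integrable_const (n:ℝ))).mono'
      ((hlip n).continuous.aestronglyMeasurable)
    filter_upwards with x
    have hb1 : -(n:ℝ) ≤ aN n x := le_max_right _ _
    have hb2 : aN n x ≤ |a x| + n := by
      apply max_le
      · linarith [le_abs_self (a x), Nat.cast_nonneg (α := ℝ) n]
      · linarith [abs_nonneg (a x), Nat.cast_nonneg (α := ℝ) n]
    have hb3 : ‖aN n x‖ ≤ |a x| + n := by
      rw [Real.norm_eq_abs, abs_le]
      exact ⟨by linarith [abs_nonneg (a x)], hb2⟩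
    simpa [Pi.add_apply] using hb3
  have hTμ : Tendsto (fun n => ∫ x, aN n x ∂μ) atTop (𝓝 (∫ x, a x ∂μ)) := by
    apply integral_tendsto_of_tendsto_of_antitone (hint μ haμ) haμ
    · filter_upwards with x using hanti x
    · filter_upwards with x using htendsto x
  have hTν : Tendsto (fun n => ∫ x, aN n x ∂ν) atTop (𝓝 (∫ x, a x ∂ν)) := by
    apply integral_tendsto_of_tendsto_of_antitone (hint ν haν) haν
    · filter_upwards with x using hanti x
    · filter_upwards with x using htendsto x
  exact le_of_tendsto_of_tendsto' hTμ hTν fun n =>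
    my_scaled μ ν h ‖g‖₊ (aN n) (hconv n) (hlip n) (hbb n)

end myAux

/-- If `∫ f dμ ≤ ∫ f dν` for every convex 1-Lipschitz function
`f : ℝᵐ → ℝ` bounded from below, then `μ ⪯_C ν` in the convex order, i.e.
`∫ f dμ ≤ ∫ f dν` for every (integrable) convex function `f`. -/
theorem stmt_2 {E : Type*} [NormedAddCommGroup E] [NormedSpace ℝ E]
    [FiniteDimensional ℝ E] [MeasurableSpace E] [BorelSpace E]
    (μ ν : Measure E) [IsProbabilityMeasure μ] [IsProbabilityMeasure ν]
    (hμ1 : Integrable (fun x => ‖x‖) μ) (hν1 : Integrable (fun x => ‖x‖) ν)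
    (h : ∀ f : E → ℝ, ConvexOn ℝ Set.univ f → LipschitzWith 1 f →
      BddBelow (Set.range f) → ∫ x, f x ∂μ ≤ ∫ x, f x ∂ν) :
    ∀ f : E → ℝ, ConvexOn ℝ Set.univ f → Integrable f μ → Integrable f ν →
      ∫ x, f x ∂μ ≤ ∫ x, f x ∂ν := by
  intro f hf hfμ hfν
  obtain ⟨g, c, hgc⟩ := my_exists_affine_minorant hf
  set a : E → ℝ := fun x => g x + c with ha
  have haμ : Integrable a μ := my_affine_integrable g c μ hμ1
  have haν : Integrable a ν := my_affine_integrable g c ν hν1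
  set G : E → ℝ := fun x => f x - a x with hG
  have hGconv : ConvexOn ℝ Set.univ G := by
    have heq : G = fun x => f x + ((-g) x + (-c)) := by
      ext x; simp [hG, ha, ContinuousLinearMap.neg_apply]; ring
    rw [heq]
    exact hf.add (my_affine_convex (-g) (-c))
  have hG0 : ∀ x, 0 ≤ G x := fun x => sub_nonneg.mpr (hgc x)
  have hGμ : Integrable G μ := hfμ.sub haμ
  have hGν : Integrable G ν := hfν.sub haν
  have h1 := my_nonneg_part μ ν h G hGconv hG0 hGμ hGν
  have h2 := my_affine_le μ ν hμ1 hν1 h g c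
  have e1 : ∫ x, f x ∂μ = ∫ x, G x ∂μ + ∫ x, a x ∂μ := by
    rw [← integral_add hGμ haμ]
    congr 1
    ext x; simp [hG]
  have e2 : ∫ x, f x ∂ν = ∫ x, G x ∂ν + ∫ x, a x ∂ν := by
    rw [← integral_add hGν haν]
    congr 1
    ext x; simp [hG]
  have h2' : ∫ x, a x ∂μ ≤ ∫ x, a x ∂ν := h2
  rw [e1, e2]
  exact add_le_add h1 h2'
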